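/- Let n ≥ 1, q = 3^n, C_0 the nonzero squares of F_q, C_1 the nonsquares, t a positive integer with gcd(t, (q-1)/2) = 1, θ ∈ F_q^* a nonzero square, and α, β ∈ F_q^* both squares or both nonsquares. Let m ∈ {0,1} with m = 0 if α is a square and m = 1 otherwise. Define f : F_q → F_q by f(0) = 0, f(x) = α·x^t for x ∈ C_0, f(x) = β(x^3 + θx^2 + θ^2 x) for x ∈ C_1 (so f is a bijection). Let s be a positive integer with s·t ≡ 1 (mod (q-1)/2), let u(x) = (α^{-1}x)^s and v(x) = Σ_{j=0}^{n-1} Σ_{k=0}^{n-1} θ·(β^{-1}θ^{-3}x)^((3^j+3^k)/2), and let g(x) = -u(x)(1 + (-1)^m x^((q-1)/2)) - v(x)(1 + (-1)^(m+1) x^((q-1)/2)). Then g(f(c)) = c for every c ∈ F_q. -/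

import Mathlib

theorem stmt_18 {F : Type*} [Field F] [Fintype F] (n : ℕ) (hn : 1 ≤ n)
    (hcard : Fintype.card F = 3 ^ n)
    (t : ℕ) (ht : 0 < t) (hgcd : Nat.gcd t ((3 ^ n - 1) / 2) = 1)
    (α β θ : F) (hα : α ≠ 0) (hβ : β ≠ 0) (hθ0 : θ ≠ 0)
    (hθ : IsSquare θ) (hαβ : IsSquare α ↔ IsSquare β)
    (m : ℕ) (hm : (IsSquare α ∧ m = 0) ∨ (¬ IsSquare α ∧ m = 1))
    (s : ℕ) (hs : 0 < s) (hst : s * t ≡ 1 [MOD (3 ^ n - 1) / 2])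
    (f u v g : F → F)
    (hf0 : f 0 = 0)
    (hfs : ∀ x : F, x ≠ 0 → IsSquare x → f x = α * x ^ t)
    (hfn : ∀ x : F, x ≠ 0 → ¬ IsSquare x → f x = β * (x ^ 3 + θ * x ^ 2 + θ ^ 2 * x))
    (hu : ∀ x, u x = (α⁻¹ * x) ^ s)
    (hv : ∀ x, v x = ∑ j ∈ Finset.range n, ∑ k ∈ Finset.range n,
        θ * (β⁻¹ * θ⁻¹ ^ 3 * x) ^ ((3 ^ j + 3 ^ k) / 2))
    (hg : ∀ x, g x = -(u x) * (1 + (-1 : F) ^ m * x ^ ((3 ^ n - 1) / 2)) -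
        v x * (1 + (-1 : F) ^ (m + 1) * x ^ ((3 ^ n - 1) / 2))) :
    ∀ c : F, g (f c) = c := by
  -- characteristic 3
  haveI hfact : Fact (Nat.Prime 3) := ⟨by norm_num⟩
  haveI hchar : CharP F 3 := by
    have h0 : ((3 ^ n : ℕ) : F) = 0 := by
      rw [← hcard]; exact FiniteField.cast_card_eq_zero F
    have hp : (ringChar F).Prime := CharP.char_is_prime F _
    have hdvd : ringChar F ∣ 3 ^ n := (ringChar.spec F _).mp h0
    have h3 : ringChar F = 3 :=
      (Nat.prime_dvd_prime_iff_eq hp (by norm_num)).mp (hp.dvd_of_dvd_pow hdvd)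
    exact h3 ▸ ringChar.charP F
  have h3 : (3 : F) = 0 := by exact_mod_cast CharP.cast_eq_zero F 3
  set e : ℕ := (3 ^ n - 1) / 2 with hedef
  have hodd : Odd (3 ^ n) := Odd.pow ⟨1, by norm_num⟩
  obtain ⟨K, hK⟩ := hodd
  have h2e : 2 * e = 3 ^ n - 1 := by omega
  have he1 : 1 ≤ e := by
    have : 3 ≤ 3 ^ n := by
      calc 3 = 3 ^ 1 := (pow_one 3).symm
      _ ≤ 3 ^ n := Nat.pow_le_pow_right (by norm_num) hn
    omega
  have hcard2 : Fintype.card F / 2 = e := by rw [hcard]; omega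
  have hring2 : ringChar F ≠ 2 := by rw [ringChar.eq F 3]; norm_num
  have hsqp : ∀ a : F, a ≠ 0 → IsSquare a → a ^ e = 1 := by
    intro a ha hsa
    have := (FiniteField.isSquare_iff hring2 ha).mp hsa
    rwa [hcard2] at this
  have hallp : ∀ a : F, a ≠ 0 → a ^ (2 * e) = 1 := by
    intro a ha
    have := FiniteField.pow_card_sub_one_eq_one a ha
    rwa [hcard, ← h2e] at this
  have hnsqp : ∀ a : F, a ≠ 0 → ¬ IsSquare a → a ^ e = -1 := by
    intro a ha hna
    have h1 : a ^ e ≠ 1 := fun h =>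
      hna ((FiniteField.isSquare_iff hring2 ha).mpr (by rwa [hcard2]))
    have h2 : a ^ e * a ^ e = 1 := by
      rw [← pow_add]
      have : e + e = 2 * e := by ring
      rw [this]; exact hallp a ha
    have h4 : (a ^ e - 1) * (a ^ e + 1) = 0 := by linear_combination h2
    rcases mul_eq_zero.mp h4 with h | h
    · exact absurd (by linear_combination h : a ^ e = 1) h1
    · linear_combination h
  intro c
  by_cases hc0 : c = 0
  · -- zero case
    subst hc0
    have hu0 : u 0 = 0 := by rw [hu, mul_zero, zero_pow hs.ne']
    have hv0 : v 0 = 0 := by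
      rw [hv]
      apply Finset.sum_eq_zero; intro j _
      apply Finset.sum_eq_zero; intro k _
      have hjk : (3 ^ j + 3 ^ k) / 2 ≠ 0 := by
        have h1 : 1 ≤ 3 ^ j := Nat.one_le_pow _ _ (by norm_num)
        have h2 : 1 ≤ 3 ^ k := Nat.one_le_pow _ _ (by norm_num)
        omega
      rw [mul_zero, zero_pow hjk, mul_zero]
    rw [hf0, hg, hu0, hv0]; ring
  by_cases hcs : IsSquare c
  · -- nonzero square case
    have hce : c ^ e = 1 := hsqp c hc0 hcs
    have hαe : α ^ e = (-1 : F) ^ m := by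
      rcases hm with ⟨hsa, hm0⟩ | ⟨hna, hm1⟩
      · subst hm0; simpa using hsqp α hα hsa
      · subst hm1; simpa using hnsqp α hα hna
    have hx0 : α * c ^ t ≠ 0 := mul_ne_zero hα (pow_ne_zero _ hc0)
    have hxe : (α * c ^ t) ^ e = (-1 : F) ^ m := by
      rw [mul_pow, ← pow_mul, mul_comm t e, pow_mul, hce, one_pow, mul_one, hαe]
    have hust : u (α * c ^ t) = c := by
      rw [hu]
      have h1 : α⁻¹ * (α * c ^ t) = c ^ t := by field_simp
      rw [h1, ← pow_mul]
      have h1 : 1 ≤ s * t := Nat.mul_pos hs ht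
      have hd : e ∣ s * t - 1 := (Nat.modEq_iff_dvd' h1).mp hst.symm
      obtain ⟨k, hk⟩ := hd
      have hts : t * s = e * k + 1 := by
        rw [mul_comm t s, (Nat.sub_eq_iff_eq_add h1).mp hk]
      rw [hts, pow_add, pow_one, pow_mul, hce, one_pow, one_mul]
    rw [hfs c hc0 hcs, hg, hxe, hust, pow_succ]
    have hmm : ((-1 : F) ^ m) * ((-1 : F) ^ m) = 1 := by
      rw [← pow_add]
      have : m + m = 2 * m := by ring
      rw [this, pow_mul]; norm_num
    linear_combination (v (α * c ^ t) - c) * hmm + (-c) * h3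
  · -- nonsquare case
    have hce : c ^ e = -1 := hnsqp c hc0 hcs
    have hcθ : c - θ ≠ 0 := sub_ne_zero.mpr (fun h => hcs (h ▸ hθ))
    have hfac : c ^ 3 + θ * c ^ 2 + θ ^ 2 * c = c * (c - θ) ^ 2 := by
      linear_combination (θ * c ^ 2) * h3
    set x : F := β * (c ^ 3 + θ * c ^ 2 + θ ^ 2 * c) with hxdef
    have hx0 : x ≠ 0 := by
      rw [hxdef, hfac]
      exact mul_ne_zero hβ (mul_ne_zero hc0 (pow_ne_zero _ hcθ))
    have hβe : β ^ e = (-1 : F) ^ m := by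
      rcases hm with ⟨hsa, hm0⟩ | ⟨hna, hm1⟩
      · subst hm0; simpa using hsqp β hβ (hαβ.mp hsa)
      · subst hm1; simpa using hnsqp β hβ (fun hsb => hna (hαβ.mpr hsb))
    have hθe : θ ^ e = 1 := hsqp θ hθ0 hθ
    have hze : (θ⁻¹ : F) ^ e = 1 := by rw [inv_pow, hθe, inv_one]
    have hθz : θ * θ⁻¹ = 1 := mul_inv_cancel₀ hθ0
    have hce2 : ((c - θ) ^ 2) ^ e = 1 := by
      rw [← pow_mul]
      exact hallp (c - θ) hcθ
    have hxe : x ^ e = (-1 : F) ^ (m + 1) := by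
      rw [hxdef, hfac, mul_pow, mul_pow, hce2, mul_one, hβe, hce, pow_succ]
    set y : F := θ⁻¹ ^ 3 * (c * (c - θ) ^ 2) with hydef
    have hy : β⁻¹ * θ⁻¹ ^ 3 * x = y := by
      rw [hxdef, hfac, hydef]; field_simp
    -- the key inductive identity
    have aux : ∀ i : ℕ, (c - θ) * (∑ j ∈ Finset.range i, y ^ ((3 ^ j - 1) / 2))
        = θ * ((c * θ⁻¹) ^ ((3 ^ i - 1) / 2) - 1) := by
      intro i
      induction i with
      | zero => simp
      | succ i ih =>
        have hoi : Odd (3 ^ i) := Odd.pow ⟨1, by norm_num⟩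
        obtain ⟨E', hE'⟩ := hoi
        set E : ℕ := (3 ^ i - 1) / 2 with hEdef
        have hE : 3 ^ i = 2 * E + 1 := by omega
        have h3E : (3 ^ (i + 1) - 1) / 2 = 3 * E + 1 := by
          have : 3 ^ (i + 1) = 3 * 3 ^ i := by ring
          omega
        rw [Finset.sum_range_succ, mul_add, ih, h3E]
        have key : (c - θ) ^ (2 * E + 1) = c ^ (2 * E + 1) - θ ^ (2 * E + 1) := by
          rw [← hE]; exact sub_pow_char_pow c θ i
        have hp1 : θ ^ (2 * E) * θ⁻¹ ^ (2 * E) = 1 := by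
          rw [← mul_pow, hθz, one_pow]
        have hexpand : y ^ E = θ⁻¹ ^ (3 * E) * (c ^ E * (c - θ) ^ (2 * E)) := by
          rw [hydef, mul_pow, mul_pow, ← pow_mul, ← pow_mul]
        have hcz1 : (c * θ⁻¹) ^ E = c ^ E * θ⁻¹ ^ E := mul_pow c θ⁻¹ E
        have hcz2 : (c * θ⁻¹) ^ (3 * E + 1) = c ^ (3 * E + 1) * θ⁻¹ ^ (3 * E + 1) :=
          mul_pow c θ⁻¹ (3 * E + 1)
        rw [hexpand, hcz1, hcz2]
        linear_combination (θ⁻¹ ^ (3 * E) * c ^ E) * key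
          + (-(θ * c ^ E * θ⁻¹ ^ E)) * hp1
          + (-(c ^ (3 * E + 1) * θ⁻¹ ^ (3 * E))) * hθz
    set B : F := ∑ j ∈ Finset.range n, y ^ ((3 ^ j - 1) / 2) with hBdef
    have hBn : (c - θ) * B = θ := by
      have := aux n
      rw [← hedef] at this
      rw [hBdef, this, mul_pow, hce, hze, mul_one]
      linear_combination (-θ) * h3
    have hexp : ∀ j k : ℕ, (3 ^ j + 3 ^ k) / 2 = (3 ^ j - 1) / 2 + ((3 ^ k - 1) / 2 + 1) := by
      intro j k
      obtain ⟨a, ha⟩ : Odd (3 ^ j) := Odd.pow ⟨1, by norm_num⟩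
      obtain ⟨b, hb⟩ : Odd (3 ^ k) := Odd.pow ⟨1, by norm_num⟩
      omega
    have hvx : v x = θ * y * (B * B) := by
      rw [hv]
      simp only [hy, hexp, pow_add, pow_one]
      rw [hBdef, Finset.sum_mul_sum, Finset.mul_sum]
      apply Finset.sum_congr rfl; intro j _
      rw [Finset.mul_sum]
      apply Finset.sum_congr rfl; intro k _
      ring
    have hvc : v x = c := by
      have hθ3 : θ ^ 3 * θ⁻¹ ^ 3 = 1 := by rw [← mul_pow, hθz, one_pow]
      have hmul : (c - θ) ^ 2 * v x = (c - θ) ^ 2 * c := by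
        rw [hvx, hydef]
        have h1 : (c - θ) ^ 2 * (θ * (θ⁻¹ ^ 3 * (c * (c - θ) ^ 2)) * (B * B))
            = θ⁻¹ ^ 3 * (c * (c - θ) ^ 2) * θ * (((c - θ) * B) * ((c - θ) * B)) := by
          ring
        rw [h1, hBn]
        linear_combination (c * (c - θ) ^ 2) * hθ3
      exact mul_left_cancel₀ (pow_ne_zero 2 hcθ) hmul
    rw [hfn c hc0 hcs, hg, ← hxdef, hxe, hvc, pow_succ]
    have hmm : ((-1 : F) ^ m) * ((-1 : F) ^ m) = 1 := by
      rw [← pow_add]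
      have : m + m = 2 * m := by ring
      rw [this, pow_mul]; norm_num
    linear_combination (u x - c) * hmm + (-c) * h3
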